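/- In a weakly communicating average-reward MDP with optimal gain ρ* and optimal bias h*, for every state s and every horizon t ≥ 1, the optimal t-step (finite-horizon, undiscounted) value function V_t* satisfies |t·ρ* − V_t*(s)| ≤ sp(h*). -/

import Mathlib

open Finset

lemma sup'_add_const' {ι : Type*} (s : Finset ι) (H : s.Nonempty) (f : ι → ℝ) (c : ℝ) :
    s.sup' H (fun a => f a + c) = s.sup' H f + c := by
  apply le_antisymm
  · exact Finset.sup'_le _ _ fun a ha => add_le_add_left (Finset.le_sup' f ha) c
  · have : s.sup' H f ≤ s.sup' H (fun a => f a + c) - c :=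
      Finset.sup'_le _ _ fun a ha => le_sub_iff_add_le.mpr (Finset.le_sup' (fun a => f a + c) ha)
    linarith

/-- Finite-horizon approximation of the optimal average reward (Lemma 13 of Wei et al.
2021): in a weakly communicating MDP, the optimal `t`-step undiscounted value function
satisfies `|t ρ* - V_t*(s)| ≤ sp(h*)` for every state `s` and horizon `t ≥ 1`. -/
theorem stmt18 {S A : Type*} [Fintype S] [Fintype A] [Nonempty S] [Nonempty A]
    (P : S → A → S → ℝ) (r : S → A → ℝ)
    (hP0 : ∀ s a s', 0 ≤ P s a s') (hP1 : ∀ s a, ∑ s', P s a s' = 1)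
    (hr0 : ∀ s a, 0 ≤ r s a) (hr1 : ∀ s a, r s a ≤ 1)
    (ρ : ℝ) (h : S → ℝ)
    (hBellAvg : ∀ s, ρ + h s =
      univ.sup' univ_nonempty (fun a => r s a + ∑ s', P s a s' * h s'))
    (V : ℕ → S → ℝ)
    (hV0 : ∀ s, V 0 s = 0)
    (hVrec : ∀ t s, V (t + 1) s =
      univ.sup' univ_nonempty (fun a => r s a + ∑ s', P s a s' * V t s')) :
    ∀ t : ℕ, 1 ≤ t → ∀ s,
      |(t : ℝ) * ρ - V t s| ≤
        univ.sup' univ_nonempty h - univ.inf' univ_nonempty h := by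
  set M := univ.sup' univ_nonempty h with hM
  set m := univ.inf' univ_nonempty h with hm
  have hle : ∀ s : S, m ≤ h s ∧ h s ≤ M :=
    fun s => ⟨Finset.inf'_le _ (mem_univ s), Finset.le_sup' _ (mem_univ s)⟩
  have key : ∀ t : ℕ, ∀ s : S,
      (t : ℝ) * ρ + h s - M ≤ V t s ∧ V t s ≤ (t : ℝ) * ρ + h s - m := by
    intro t
    induction t with
    | zero =>
      intro s
      simp only [Nat.cast_zero, zero_mul, zero_add, hV0]
      exact ⟨by linarith [(hle s).2], by linarith [(hle s).1]⟩
    | succ t ih =>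
      intro s
      have esum : ∀ (c : ℝ) (a : A),
          ∑ s', P s a s' * ((t : ℝ) * ρ + h s' - c)
            = (t : ℝ) * ρ - c + ∑ s', P s a s' * h s' := by
        intro c a
        have : ∑ s', P s a s' * ((t : ℝ) * ρ + h s' - c)
            = (∑ s', P s a s') * ((t : ℝ) * ρ - c) + ∑ s', P s a s' * h s' := by
          rw [Finset.sum_mul, ← Finset.sum_add_distrib]
          exact Finset.sum_congr rfl fun s' _ => by ring
        rw [this, hP1]; ring
      constructor
      · rw [hVrec]
        have h1 : ∀ a : A, r s a + ∑ s', P s a s' * h s' + ((t : ℝ) * ρ - M)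
            ≤ r s a + ∑ s', P s a s' * V t s' := by
          intro a
          have := Finset.sum_le_sum (fun s' (_ : s' ∈ univ) =>
            mul_le_mul_of_nonneg_left (ih s').1 (hP0 s a s'))
          rw [esum M a] at this
          linarith
        have h2 : univ.sup' univ_nonempty
            (fun a => r s a + ∑ s', P s a s' * h s' + ((t : ℝ) * ρ - M))
            ≤ univ.sup' univ_nonempty (fun a => r s a + ∑ s', P s a s' * V t s') :=
          Finset.sup'_mono_fun fun a _ => h1 a
        rw [sup'_add_const'] at h2
        rw [← hBellAvg s] at h2
        push_cast
        linarith
      · rw [hVrec]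
        have h1 : ∀ a : A, r s a + ∑ s', P s a s' * V t s'
            ≤ r s a + ∑ s', P s a s' * h s' + ((t : ℝ) * ρ - m) := by
          intro a
          have := Finset.sum_le_sum (fun s' (_ : s' ∈ univ) =>
            mul_le_mul_of_nonneg_left (ih s').2 (hP0 s a s'))
          rw [esum m a] at this
          linarith
        have h2 : univ.sup' univ_nonempty (fun a => r s a + ∑ s', P s a s' * V t s')
            ≤ univ.sup' univ_nonempty
              (fun a => r s a + ∑ s', P s a s' * h s' + ((t : ℝ) * ρ - m)) :=
          Finset.sup'_mono_fun fun a _ => h1 a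
        rw [sup'_add_const'] at h2
        rw [← hBellAvg s] at h2
        push_cast
        linarith
  intro t _ s
  rcases key t s with ⟨k1, k2⟩
  rcases hle s with ⟨l1, l2⟩
  rw [abs_sub_le_iff]
  constructor <;> linarith
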